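/- Let X be a finite connected poset and f : X → ℝ order preserving. Define x ∼ y iff there is a poset path from x to y along which f is constant. Then ∼ is an equivalence relation, and the relation on the quotient R_f(X) given by [x] ≤ [y] iff there is an f-nondecreasing poset path from x to y is a well-defined partial order. -/

import Mathlib

open scoped Classical

namespace ReebPoset

variable {X : Type*}

/-- Two elements of a poset are comparable. -/
def Cmp [PartialOrder X] (a b : X) : Prop := a ≤ b ∨ b ≤ a

/-- A poset path from `x` to `y`: a finite sequence of consecutively comparable elements. -/
structure Path [PartialOrder X] (x y : X) where
  n : ℕ
  pts : Fin (n + 1) → X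
  first : pts 0 = x
  last : pts (Fin.last n) = y
  step : ∀ i : Fin n, Cmp (pts i.castSucc) (pts i.succ)

/-- A poset is connected if any two points are joined by a poset path. -/
def Connected (X : Type*) [PartialOrder X] : Prop := ∀ x y : X, Nonempty (Path x y)

/-- The `f`-length of a poset path. -/
noncomputable def flen [PartialOrder X] (f : X → ℝ) {x y : X} (γ : Path x y) : ℝ :=
  ∑ i : Fin γ.n, |f (γ.pts i.succ) - f (γ.pts i.castSucc)|

/-- The metric induced by the filtration `f` (the Reeb metric). -/
noncomputable def df [PartialOrder X] (f : X → ℝ) (x y : X) : ℝ :=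
  sInf {L | ∃ γ : Path x y, L = flen f γ}

/-- The Gromov product associated to `f`. -/
noncomputable def gf [PartialOrder X] (f : X → ℝ) (x y : X) : ℝ :=
  (f x + f y - df f x y) / 2

/-- The poset hyperbolicity of `(X, f)`. -/
noncomputable def hypf (X : Type*) [PartialOrder X] (f : X → ℝ) : ℝ :=
  sInf {ε : ℝ | 0 ≤ ε ∧ ∀ x y z : X, gf f x z ≥ min (gf f x y) (gf f y z) - ε}

/-- The merge value `m_f(x,y)`: max over poset paths of the min of `f` along the path. -/
noncomputable def mf [PartialOrder X] (f : X → ℝ) (x y : X) : ℝ :=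
  sSup {m | ∃ γ : Path x y,
    m = Finset.univ.inf' Finset.univ_nonempty (fun i : Fin (γ.n + 1) => f (γ.pts i))}

/-- A poset path is a fence if its points are distinct and non-consecutive points
are incomparable. -/
def IsFence [PartialOrder X] {x y : X} (γ : Path x y) : Prop :=
  Function.Injective γ.pts ∧
  ∀ i j : Fin (γ.n + 1), (i : ℕ) + 2 ≤ (j : ℕ) → ¬ Cmp (γ.pts i) (γ.pts j)

/-- The maximal length of a fence in the poset `X`. -/
noncomputable def MF (X : Type*) [PartialOrder X] : ℕ :=
  sSup {n : ℕ | ∃ x y : X, ∃ γ : Path x y, IsFence γ ∧ γ.n = n}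

/-- A merging point: an element covering at least two distinct elements. -/
def Merging [PartialOrder X] (x : X) : Prop := ∃ y z : X, y ≠ z ∧ y ⋖ x ∧ z ⋖ x

/-- A poset is a tree if every down-set is a chain. -/
def IsTreePoset (X : Type*) [PartialOrder X] : Prop :=
  ∀ a b c : X, a ≤ c → b ≤ c → (a ≤ b ∨ b ≤ a)

/-- The covering graph of a poset. -/
def covGraph (X : Type*) [PartialOrder X] : SimpleGraph X :=
  SimpleGraph.fromRel (fun a b => a ⋖ b)

/-- The number of elements covered by `x`. -/
noncomputable def iota [PartialOrder X] [Fintype X] (x : X) : ℕ :=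
  (Finset.univ.filter (fun y => y ⋖ x)).card

/-- The first Betti number of a graph: the minimal number of edges one needs to remove
to obtain a tree. -/
noncomputable def betti (G : SimpleGraph X) : ℕ :=
  sInf {k | ∃ s : Set (Sym2 X), s.ncard = k ∧ (G.deleteEdges s).IsTree}

/-- `x ∼ y` iff some poset path from `x` to `y` is `f`-constant. -/
def constRel [PartialOrder X] (f : X → ℝ) (x y : X) : Prop :=
  ∃ γ : Path x y, ∀ i : Fin (γ.n + 1), f (γ.pts i) = f x

/-- `[x] ≤ [y]` in the Reeb poset iff some poset path from `x` to `y` is `f`-nondecreasing. -/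
def ndRel [PartialOrder X] (f : X → ℝ) (x y : X) : Prop :=
  ∃ γ : Path x y, ∀ i : Fin γ.n, f (γ.pts i.castSucc) ≤ f (γ.pts i.succ)

/-- `x ∼ y` in the Reeb tree construction: some poset path from `x` to `y` has all
`f`-values at least `max (f x) (f y)`. -/
def treeEq [PartialOrder X] (f : X → ℝ) (x y : X) : Prop :=
  ∃ γ : Path x y, ∀ i : Fin (γ.n + 1), max (f x) (f y) ≤ f (γ.pts i)

/-- `[x] ≤ [y]` in the Reeb tree poset: some poset path from `x` to `y` has all
`f`-values at least `f x`. -/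
def treeLe [PartialOrder X] (f : X → ℝ) (x y : X) : Prop :=
  ∃ γ : Path x y, ∀ i : Fin (γ.n + 1), f x ≤ f (γ.pts i)

end ReebPoset

namespace ReebAux
open ReebPoset Relation

variable {X : Type*} [PartialOrder X]

lemma cmp_symm {a b : X} (h : Cmp a b) : Cmp b a := h.symm

def pathSnoc {x y z : X} (γ : Path x y) (h : Cmp y z) : Path x z where
  n := γ.n + 1
  pts := Fin.snoc γ.pts z
  first := by
    have h0 : (0 : Fin (γ.n + 1 + 1)) = Fin.castSucc 0 := by simp
    rw [h0, Fin.snoc_castSucc, γ.first]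
  last := Fin.snoc_last _ _
  step := by
    intro i
    refine Fin.lastCases ?_ ?_ i
    · rw [Fin.snoc_castSucc, Fin.succ_last, Fin.snoc_last, γ.last]
      exact h
    · intro j
      rw [Fin.succ_castSucc, Fin.snoc_castSucc, Fin.snoc_castSucc]
      exact γ.step j

def relOf (r : X → X → Prop) (x y : X) : Prop :=
  ∃ γ : Path x y, ∀ i : Fin γ.n, r (γ.pts i.castSucc) (γ.pts i.succ)

lemma relOf_iff (r : X → X → Prop) (x y : X) :
    relOf r x y ↔ ReflTransGen (fun a b => Cmp a b ∧ r a b) x y := by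
  constructor
  · rintro ⟨γ, hγ⟩
    have key : ∀ k : Fin (γ.n + 1),
        ReflTransGen (fun a b => Cmp a b ∧ r a b) x (γ.pts k) := by
      intro k
      induction k using Fin.induction with
      | zero => rw [γ.first]
      | succ i ih => exact ih.tail ⟨γ.step i, hγ i⟩
    have := key (Fin.last γ.n)
    rwa [γ.last] at this
  · intro h
    induction h with
    | refl => exact ⟨⟨0, fun _ => x, rfl, rfl, fun i => i.elim0⟩, fun i => i.elim0⟩
    | tail _ hbc ih =>
        obtain ⟨γ, hγ⟩ := ih
        refine ⟨pathSnoc γ hbc.1, ?_⟩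
        intro i
        refine Fin.lastCases ?_ ?_ i
        · simp only [pathSnoc]
          rw [Fin.snoc_castSucc, Fin.succ_last, Fin.snoc_last, γ.last]
          exact hbc.2
        · intro j
          simp only [pathSnoc]
          rw [Fin.succ_castSucc, Fin.snoc_castSucc, Fin.snoc_castSucc]
          exact hγ j

lemma constRel_iff (f : X → ℝ) (x y : X) :
    constRel f x y ↔ relOf (fun a b => f a = f b) x y := by
  constructor
  · rintro ⟨γ, hγ⟩
    exact ⟨γ, fun i => (hγ i.castSucc).trans (hγ i.succ).symm⟩
  · rintro ⟨γ, hγ⟩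
    refine ⟨γ, fun i => ?_⟩
    induction i using Fin.induction with
    | zero => rw [γ.first]
    | succ j ih => rw [← hγ j]; exact ih

lemma constRel_iff' (f : X → ℝ) (x y : X) :
    constRel f x y ↔ ReflTransGen (fun a b => Cmp a b ∧ f a = f b) x y := by
  rw [constRel_iff, relOf_iff]

lemma ndRel_iff (f : X → ℝ) (x y : X) :
    ndRel f x y ↔ ReflTransGen (fun a b => Cmp a b ∧ f a ≤ f b) x y := by
  rw [← relOf_iff]; rfl

lemma le_of_nd {f : X → ℝ} {x y : X}
    (h : ReflTransGen (fun a b => Cmp a b ∧ f a ≤ f b) x y) : f x ≤ f y := by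
  induction h with
  | refl => exact le_rfl
  | tail _ hbc ih => exact ih.trans hbc.2

lemma nd_antisym {f : X → ℝ} {x y : X}
    (h : ReflTransGen (fun a b => Cmp a b ∧ f a ≤ f b) x y) (hle : f y ≤ f x) :
    ReflTransGen (fun a b => Cmp a b ∧ f a = f b) x y := by
  induction h with
  | refl => exact .refl
  | @tail b c hab hbc ih =>
      have h1 : f x ≤ f b := le_of_nd hab
      have h2 : f b ≤ f c := hbc.2
      exact (ih (by linarith)).tail ⟨hbc.1, by linarith⟩

lemma constRel_symm_aux {f : X → ℝ} {x y : X} (h : constRel f x y) : constRel f y x := by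
  rw [constRel_iff'] at h ⊢
  haveI : Std.Symm (fun a b : X => Cmp a b ∧ f a = f b) :=
    ⟨fun a b hab => ⟨cmp_symm hab.1, hab.2.symm⟩⟩
  exact Relation.ReflTransGen.symmetric.symm _ _ h

lemma constRel_to_nd {f : X → ℝ} {x y : X} (h : constRel f x y) : ndRel f x y := by
  rw [constRel_iff'] at h
  rw [ndRel_iff]
  exact ReflTransGen.mono (fun a b hab => ⟨hab.1, hab.2.le⟩) _ _ h

end ReebAux

open ReebPoset in
/-- `∼` (existence of an `f`-constant poset path) is an equivalence
relation, and `[x] ≤ [y]` (existence of an `f`-nondecreasing poset path) is a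
well-defined partial order on the quotient. -/
theorem stmt8 {X : Type*} [PartialOrder X] [Fintype X]
    (hc : Connected X) (f : X → ℝ) (hm : Monotone f) :
    Equivalence (constRel f) ∧
    (∀ x x' y y' : X, constRel f x x' → constRel f y y' →
      (ndRel f x y ↔ ndRel f x' y')) ∧
    (∀ x : X, ndRel f x x) ∧
    (∀ x y z : X, ndRel f x y → ndRel f y z → ndRel f x z) ∧
    (∀ x y : X, ndRel f x y → ndRel f y x → constRel f x y) := by
  classical
  have hrefl : ∀ x : X, ndRel f x x := by
    intro x
    rw [ReebAux.ndRel_iff]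
  have htrans : ∀ x y z : X, ndRel f x y → ndRel f y z → ndRel f x z := by
    intro x y z h1 h2
    rw [ReebAux.ndRel_iff] at h1 h2 ⊢
    exact h1.trans h2
  refine ⟨⟨?_, ?_, ?_⟩, ?_, hrefl, htrans, ?_⟩
  · intro x
    rw [ReebAux.constRel_iff']
  · intro x y h
    exact ReebAux.constRel_symm_aux h
  · intro x y z h1 h2
    rw [ReebAux.constRel_iff'] at h1 h2 ⊢
    exact h1.trans h2
  · intro x x' y y' hx hy
    have hx' := ReebAux.constRel_symm_aux hx
    have hy' := ReebAux.constRel_symm_aux hy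
    constructor
    · intro h
      exact htrans _ _ _ (ReebAux.constRel_to_nd hx')
        (htrans _ _ _ h (ReebAux.constRel_to_nd hy))
    · intro h
      exact htrans _ _ _ (ReebAux.constRel_to_nd hx)
        (htrans _ _ _ h (ReebAux.constRel_to_nd hy'))
  · intro x y h1 h2
    rw [ReebAux.ndRel_iff] at h1 h2
    rw [ReebAux.constRel_iff']
    exact ReebAux.nd_antisym h1 (ReebAux.le_of_nd h2)
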